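/- Let X ⊆ {0,...,N} and Q = N^γ with γ > 0. Let c₁, c₂ > 0 and suppose there is a set P of primes p ≤ Q with ∑_{p∈P} (log p)/p ≥ c₁·log Q, such that for each p ∈ P at least c₂·|X| elements of X lie in at most α·p residue classes mod p, where α > 0 is independent of p. Then if α is sufficiently small in terms of c₁, c₂, γ, we must have |X| < Q. -/

import Mathlib

open Finset

/-- Per-prime Cauchy–Schwarz lower bound. -/
lemma sieve_aux_lower (p : ℕ) (hpp : p.Prime) (X Xp : Finset ℕ) (hXpX : Xp ⊆ X)
    (α c₂ : ℝ) (hα : 0 < α) (hc₂ : 0 ≤ c₂)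
    (hXpc : c₂ * (X.card : ℝ) ≤ (Xp.card : ℝ))
    (him : ((Xp.image (fun x : ℕ => (x : ZMod p))).card : ℝ) ≤ α * p) :
    (c₂ * (X.card : ℝ))^2 / (α * p) ≤
      ∑ a ∈ X.image (fun x : ℕ => (x : ZMod p)),
        (((X.filter fun x : ℕ => (x : ZMod p) = a).card : ℝ))^2 := by
  classical
  have hp0 : (0 : ℝ) < p := by exact_mod_cast hpp.pos
  have hαp : (0 : ℝ) < α * p := by positivity
  set I := Xp.image (fun x : ℕ => (x : ZMod p)) with hI
  have hpart : Xp.card = ∑ a ∈ I, (Xp.filter fun x : ℕ => (x : ZMod p) = a).card :=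
    card_eq_sum_card_fiberwise (fun x hx => mem_image_of_mem _ hx)
  have hCS : ((Xp.card : ℝ))^2 ≤
      (I.card : ℝ) * ∑ a ∈ I, ((Xp.filter fun x : ℕ => (x : ZMod p) = a).card : ℝ)^2 := by
    have h := sq_sum_le_card_mul_sum_sq (s := I)
      (f := fun a => ((Xp.filter fun x : ℕ => (x : ZMod p) = a).card : ℝ))
    have hsum : ∑ a ∈ I, ((Xp.filter fun x : ℕ => (x : ZMod p) = a).card : ℝ) = (Xp.card : ℝ) := by
      rw [hpart]; push_cast; ring
    rwa [hsum] at h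
  have hterm : ∑ a ∈ I, ((Xp.filter fun x : ℕ => (x : ZMod p) = a).card : ℝ)^2 ≤
      ∑ a ∈ I, ((X.filter fun x : ℕ => (x : ZMod p) = a).card : ℝ)^2 := by
    refine sum_le_sum fun a _ => ?_
    have h1 : (Xp.filter fun x : ℕ => (x : ZMod p) = a).card ≤
        (X.filter fun x : ℕ => (x : ZMod p) = a).card :=
      card_le_card (filter_subset_filter _ hXpX)
    have := (Nat.cast_le (α := ℝ)).2 h1
    exact pow_le_pow_left₀ (by positivity) this 2
  have hsub : ∑ a ∈ I, ((X.filter fun x : ℕ => (x : ZMod p) = a).card : ℝ)^2 ≤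
      ∑ a ∈ X.image (fun x : ℕ => (x : ZMod p)),
        ((X.filter fun x : ℕ => (x : ZMod p) = a).card : ℝ)^2 := by
    refine sum_le_sum_of_subset_of_nonneg (image_subset_image hXpX) fun a _ _ => by positivity
  rw [div_le_iff₀ hαp]
  calc (c₂ * (X.card : ℝ))^2 ≤ ((Xp.card : ℝ))^2 :=
        pow_le_pow_left₀ (by positivity) hXpc 2
    _ ≤ (I.card : ℝ) * ∑ a ∈ I, ((Xp.filter fun x : ℕ => (x : ZMod p) = a).card : ℝ)^2 := hCS
    _ ≤ (α * p) * ∑ a ∈ X.image (fun x : ℕ => (x : ZMod p)),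
          ((X.filter fun x : ℕ => (x : ZMod p) = a).card : ℝ)^2 := by
        exact mul_le_mul him (hterm.trans hsub) (sum_nonneg fun a _ => sq_nonneg _) hαp.le
    _ = _ := mul_comm _ _

/-- The sum of squared fiber counts equals a double count of congruent pairs. -/
lemma sieve_aux_S_eq (p : ℕ) (X : Finset ℕ) :
    ∑ a ∈ X.image (fun x : ℕ => (x : ZMod p)),
        (((X.filter fun x : ℕ => (x : ZMod p) = a).card : ℝ))^2
      = ∑ x ∈ X, ∑ y ∈ X, (if (y : ZMod p) = (x : ZMod p) then (1:ℝ) else 0) := by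
  classical
  have h1 : ∀ a ∈ X.image (fun x : ℕ => (x : ZMod p)),
      (((X.filter fun x : ℕ => (x : ZMod p) = a).card : ℝ))^2
        = ∑ x ∈ X.filter (fun x : ℕ => (x : ZMod p) = a),
            (((X.filter fun y : ℕ => (y : ZMod p) = a).card : ℝ)) := by
    intro a _
    rw [Finset.sum_const, nsmul_eq_mul, sq]
  rw [Finset.sum_congr rfl h1,
    Finset.sum_fiberwise_of_maps_to' (fun x hx => mem_image_of_mem _ hx)
      (fun a => (((X.filter fun y : ℕ => (y : ZMod p) = a).card : ℝ)))]
  refine Finset.sum_congr rfl fun x _ => ?_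
  rw [Finset.card_filter]
  push_cast
  rfl

/-- Off-diagonal: primes in `P` for which `x ≡ y` have `∑ log p ≤ log N`. -/
lemma sieve_aux_offdiag (N : ℕ) (hN : 2 ≤ N) (x y : ℕ) (hx : x ≤ N) (hy : y ≤ N)
    (hxy : y ≠ x) (P : Finset ℕ) (hP : ∀ p ∈ P, p.Prime) :
    ∑ p ∈ P.filter (fun p => (y : ZMod p) = (x : ZMod p)), Real.log p ≤ Real.log N := by
  classical
  set d : ℕ := max x y - min x y with hd
  have hd0 : 0 < d := by
    rcases le_total x y with h | h
    · have : x < y := lt_of_le_of_ne h (fun e => hxy e.symm)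
      simp [hd, max_eq_right h, min_eq_left h]; omega
    · have : y < x := lt_of_le_of_ne h hxy
      simp [hd, max_eq_left h, min_eq_right h]; omega
  have hdN : d ≤ N := le_trans (Nat.sub_le _ _) (max_le hx hy)
  set P' := P.filter (fun p => (y : ZMod p) = (x : ZMod p)) with hP'
  have hdvd : ∀ p ∈ P', p ∣ d := by
    intro p hp
    obtain ⟨hpP, hcong⟩ := Finset.mem_filter.1 hp
    have hmod : y ≡ x [MOD p] := (ZMod.natCast_eq_natCast_iff y x p).1 hcong
    rcases le_total x y with h | h
    · have : x ≡ y [MOD p] := hmod.symm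
      rw [Nat.modEq_iff_dvd' h] at this
      simpa [hd, max_eq_right h, min_eq_left h] using this
    · rw [Nat.modEq_iff_dvd' h] at hmod
      simpa [hd, max_eq_left h, min_eq_right h] using hmod
  have hprod : (∏ p ∈ P', p) ∣ d :=
    Finset.prod_primes_dvd d (fun p hp => (hP p (Finset.filter_subset _ _ hp)).prime)
      hdvd
  have hprodN : (∏ p ∈ P', p) ≤ N := le_trans (Nat.le_of_dvd hd0 hprod) hdN
  have hlog : ∑ p ∈ P', Real.log p = Real.log ((∏ p ∈ P', p : ℕ) : ℝ) := by
    rw [Nat.cast_prod, Real.log_prod]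
    intro p hp
    exact_mod_cast (hP p (Finset.filter_subset _ _ hp)).pos.ne'
  rw [hlog]
  have hpos : (0:ℝ) < ((∏ p ∈ P', p : ℕ) : ℝ) := by
    have : 0 < ∏ p ∈ P', p := Nat.pos_of_ne_zero (fun h => by
      exact absurd h (Nat.pos_of_dvd_of_pos hprod hd0).ne')
    exact_mod_cast this
  exact Real.log_le_log hpos (by exact_mod_cast hprodN)

/-- Diagonal: any subset of `P` has `∑ log p ≤ Q·B` when `log p ≤ B` on `P`. -/
lemma sieve_aux_diag (Q B : ℝ) (hQ0 : 0 ≤ Q) (hB : 0 ≤ B) (P : Finset ℕ)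
    (hP : ∀ p ∈ P, p.Prime ∧ (p : ℝ) ≤ Q) (hlog : ∀ p ∈ P, Real.log p ≤ B)
    (s : Finset ℕ) (hs : s ⊆ P) :
    ∑ p ∈ s, Real.log p ≤ Q * B := by
  classical
  have hcard : (P.card : ℝ) ≤ Q := by
    have hsub : P ⊆ Finset.Icc 2 (Nat.floor Q) := fun p hp =>
      Finset.mem_Icc.2 ⟨(hP p hp).1.two_le, Nat.le_floor (hP p hp).2⟩
    have h1 := Finset.card_le_card hsub
    rw [Nat.card_Icc] at h1
    have h2 : P.card ≤ Nat.floor Q := by omega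
    exact le_trans (by exact_mod_cast h2) (Nat.floor_le hQ0)
  calc ∑ p ∈ s, Real.log p ≤ ∑ p ∈ s, B :=
        Finset.sum_le_sum fun p hp => hlog p (hs hp)
    _ = (s.card : ℝ) * B := by rw [Finset.sum_const, nsmul_eq_mul]
    _ ≤ (P.card : ℝ) * B := by
        have := Finset.card_le_card hs
        exact mul_le_mul_of_nonneg_right (by exact_mod_cast this) hB
    _ ≤ Q * B := mul_le_mul_of_nonneg_right hcard hB


/-- Lemma 3.1, weighted larger sieve: let `Q = N^γ`.  If there is a set `P`
of primes `p ≤ Q` with `∑_{p∈P} (log p)/p ≥ c₁ log Q` such that for each `p ∈ P` at least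
`c₂|X|` elements of `X ⊆ {0,…,N}` lie in at most `α·p` residue classes mod `p`, then for
`α` sufficiently small in terms of `c₁, c₂, γ` we must have `|X| < Q`. -/
theorem weighted_larger_sieve
    (γ c₁ c₂ : ℝ) (hγ : 0 < γ) (hc₁ : 0 < c₁) (hc₂ : 0 < c₂) :
    ∃ α₀ : ℝ, 0 < α₀ ∧
      ∀ α : ℝ, 0 < α → α ≤ α₀ →
        ∀ N : ℕ, 2 ≤ N →
          ∀ X : Finset ℕ, (∀ x ∈ X, x ≤ N) →
            ∀ P : Finset ℕ,
              (∀ p ∈ P, p.Prime ∧ (p : ℝ) ≤ (N : ℝ) ^ γ) →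
              c₁ * Real.log ((N : ℝ) ^ γ) ≤ ∑ p ∈ P, Real.log p / p →
              (∀ p ∈ P, ∃ Xp ⊆ X, c₂ * (X.card : ℝ) ≤ (Xp.card : ℝ) ∧
                  ((Xp.image (fun x : ℕ => (x : ZMod p))).card : ℝ) ≤ α * p) →
              (X.card : ℝ) < (N : ℝ) ^ γ := by
  classical
  have h1γ : (0:ℝ) < 1 + γ := by linarith
  refine ⟨c₁ * c₂^2 * γ / (2 * (1 + γ)), by positivity, ?_⟩
  intro α hα hαα₀ N hN X hXN P hP hPsum hXp
  by_contra hcon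
  push_neg at hcon
  have hN1 : (1:ℝ) < (N:ℝ) := by exact_mod_cast Nat.lt_of_lt_of_le one_lt_two hN
  set L : ℝ := Real.log N with hLdef
  have hLpos : 0 < L := Real.log_pos hN1
  set Q : ℝ := (N:ℝ)^γ with hQdef
  have hlogQ : Real.log Q = γ * L := Real.log_rpow (by linarith) γ
  have hQ1 : (1:ℝ) ≤ Q := Real.one_le_rpow hN1.le hγ.le
  have hXQ : Q ≤ (X.card : ℝ) := hcon
  have hX0 : (0:ℝ) < (X.card : ℝ) := lt_of_lt_of_le zero_lt_one (hQ1.trans hXQ)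
  set S : ℕ → ℝ := fun p => ∑ a ∈ X.image (fun x : ℕ => (x : ZMod p)),
      (((X.filter fun x : ℕ => (x : ZMod p) = a).card : ℝ))^2 with hSdef
  -- lower bound for the weighted sum
  have hTlow : (c₂ * (X.card:ℝ))^2 / α * (c₁ * (γ * L)) ≤ ∑ p ∈ P, Real.log p * S p := by
    have hPsum' : c₁ * (γ * L) ≤ ∑ p ∈ P, Real.log p / p := by
      rw [← hlogQ]; exact hPsum
    calc (c₂ * (X.card:ℝ))^2 / α * (c₁ * (γ * L))
        ≤ (c₂ * (X.card:ℝ))^2 / α * (∑ p ∈ P, Real.log p / p) :=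
          mul_le_mul_of_nonneg_left hPsum' (by positivity)
      _ = ∑ p ∈ P, Real.log p * ((c₂ * (X.card:ℝ))^2 / (α * p)) := by
          rw [Finset.mul_sum]
          exact Finset.sum_congr rfl fun p hp => by ring
      _ ≤ ∑ p ∈ P, Real.log p * S p := by
          refine Finset.sum_le_sum fun p hp => ?_
          obtain ⟨Xp, hXpX, hXpc, him⟩ := hXp p hp
          have hlb := sieve_aux_lower p (hP p hp).1 X Xp hXpX α c₂ hα hc₂.le hXpc him
          exact mul_le_mul_of_nonneg_left hlb
            (Real.log_nonneg (by exact_mod_cast (hP p hp).1.one_lt.le))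
  -- upper bound for the weighted sum
  have hTup : ∑ p ∈ P, Real.log p * S p
      ≤ (X.card:ℝ) * ((X.card:ℝ) * L + Q * (γ * L)) := by
    have hSid : ∀ p ∈ P, Real.log p * S p
        = ∑ x ∈ X, ∑ y ∈ X, (if (y : ZMod p) = (x : ZMod p) then Real.log p else 0) := by
      intro p hp
      simp only [hSdef]
      rw [sieve_aux_S_eq p X, Finset.mul_sum]
      refine Finset.sum_congr rfl fun x _ => ?_
      rw [Finset.mul_sum]
      refine Finset.sum_congr rfl fun y _ => ?_
      split <;> simp
    calc ∑ p ∈ P, Real.log p * S p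
        = ∑ x ∈ X, ∑ y ∈ X, ∑ p ∈ P,
            (if (y : ZMod p) = (x : ZMod p) then Real.log p else 0) := by
          rw [Finset.sum_congr rfl hSid, Finset.sum_comm]
          exact Finset.sum_congr rfl fun x _ => Finset.sum_comm
      _ ≤ ∑ x ∈ X, ∑ y ∈ X, (L + (if y = x then Q * (γ * L) else 0)) := by
          refine Finset.sum_le_sum fun x hx => Finset.sum_le_sum fun y hy => ?_
          rw [← Finset.sum_filter]
          by_cases hyx : y = x
          · subst hyx
            rw [if_pos rfl]
            have hbd : ∑ p ∈ P.filter (fun p => ((y:ℕ) : ZMod p) = ((y:ℕ) : ZMod p)),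
                Real.log p ≤ Q * (γ * L) := by
              refine sieve_aux_diag Q (γ * L) (by linarith) (by positivity) P hP ?_
                _ (Finset.filter_subset _ _)
              intro p hp
              have hp0 : (0:ℝ) < p := by exact_mod_cast (hP p hp).1.pos
              have := Real.log_le_log hp0 (hP p hp).2
              rwa [hlogQ] at this
            exact le_add_of_nonneg_of_le hLpos.le hbd
          · have hbd := sieve_aux_offdiag N hN x y (hXN x hx) (hXN y hy) hyx P
              (fun p hp => (hP p hp).1)
            rw [if_neg hyx, add_zero, hLdef]
            exact hbd
      _ = ∑ x ∈ X, ((X.card:ℝ) * L + Q * (γ * L)) := by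
          refine Finset.sum_congr rfl fun x hx => ?_
          rw [Finset.sum_add_distrib, Finset.sum_const, nsmul_eq_mul,
            Finset.sum_ite_eq' X x (fun _ => Q * (γ * L)), if_pos hx]
      _ = (X.card:ℝ) * ((X.card:ℝ) * L + Q * (γ * L)) := by
          rw [Finset.sum_const, nsmul_eq_mul]
  -- combine
  have hchain := hTlow.trans hTup
  have e1 : (c₂ * (X.card:ℝ))^2 / α * (c₁ * (γ * L))
      = (c₁ * c₂^2 * γ / α) * (((X.card:ℝ))^2 * L) := by ring
  have e2 : (X.card:ℝ) * ((X.card:ℝ) * L + Q * (γ * L))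
      ≤ (1 + γ) * (((X.card:ℝ))^2 * L) := by
    have h3 : Q * (γ * L) ≤ (X.card:ℝ) * (γ * L) :=
      mul_le_mul_of_nonneg_right hXQ (by positivity)
    have h4 : (X.card:ℝ) * ((X.card:ℝ) * L + Q * (γ * L))
        ≤ (X.card:ℝ) * ((X.card:ℝ) * L + (X.card:ℝ) * (γ * L)) :=
      mul_le_mul_of_nonneg_left (by linarith) hX0.le
    calc (X.card:ℝ) * ((X.card:ℝ) * L + Q * (γ * L))
        ≤ (X.card:ℝ) * ((X.card:ℝ) * L + (X.card:ℝ) * (γ * L)) := h4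
      _ = (1 + γ) * (((X.card:ℝ))^2 * L) := by ring
  rw [e1] at hchain
  have hdiv : c₁ * c₂^2 * γ / α ≤ 1 + γ := by
    have hpos : (0:ℝ) < ((X.card:ℝ))^2 * L := by positivity
    exact le_of_mul_le_mul_right (hchain.trans e2) hpos
  have hC : (0:ℝ) < c₁ * c₂^2 * γ := by positivity
  have hmono : c₁ * c₂^2 * γ / (c₁ * c₂^2 * γ / (2 * (1 + γ))) ≤ c₁ * c₂^2 * γ / α := by
    gcongr
  have heq : c₁ * c₂^2 * γ / (c₁ * c₂^2 * γ / (2 * (1 + γ))) = 2 * (1 + γ) := by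
    field_simp
  rw [heq] at hmono
  linarith
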